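/- arXiv:1009.4519 — 6 statements merged into one kernel-verified Lean document; each statement's English description precedes it below -/
import Mathlib

section
/- Let G'' be a Lindelöf topological group, G a topological group, and j : G → G'' a continuous surjective open group homomorphism that admits a continuous local section on some open neighbourhood of the identity of G''. Then there exists a measurable section σ : G'' → G of j (i.e. j ∘ σ = id) which is continuous on some open neighbourhood of the identity of G''. -/
open scoped Pointwise


/-- A continuous surjective open homomorphism onto a Lindelöf topological
group admitting a continuous local section near the identity admits a global measurable
section which is continuous on a neighbourhood of the identity. -/
theorem stmt_0 {G G'' : Type*} [Group G] [TopologicalSpace G] [IsTopologicalGroup G]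
    [MeasurableSpace G] [BorelSpace G]
    [Group G''] [TopologicalSpace G''] [IsTopologicalGroup G''] [LindelofSpace G'']
    [MeasurableSpace G''] [BorelSpace G'']
    (j : G →* G'') (hjc : Continuous j) (hjsurj : Function.Surjective j) (hjopen : IsOpenMap j)
    (U : Set G'') (hU : IsOpen U) (hU1 : (1 : G'') ∈ U)
    (s : G'' → G) (hs : ∀ x ∈ U, j (s x) = x) (hsc : ContinuousOn s U) :
    ∃ σ : G'' → G, Measurable σ ∧ (∀ x, j (σ x) = x) ∧
      ∃ V : Set G'', IsOpen V ∧ (1 : G'') ∈ V ∧ ContinuousOn σ V := by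
  classical
  -- countable cover of G'' by translates of U
  obtain ⟨f₀, hf₀⟩ := isLindelof_univ.indexed_countable_subcover (fun g : G'' => g • U)
    (fun g => hU.smul g) (fun x _ => Set.mem_iUnion.2 ⟨x, by
      simpa using Set.smul_mem_smul_set (a := x) hU1⟩)
  -- prepend 1 so that index 0 gives U itself
  set f : ℕ → G'' := fun n => Nat.rec (1 : G'') (fun k _ => f₀ k) n with hf
  have hf0 : f 0 = 1 := rfl
  have hex : ∀ x : G'', ∃ n, x ∈ f n • U := by
    intro x
    obtain ⟨n, hn⟩ := Set.mem_iUnion.1 (hf₀ (Set.mem_univ x))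
    exact ⟨n + 1, hn⟩
  -- choose preimages of f n, with g 0 = 1
  have hgex : ∀ n : ℕ, ∃ g : G, j g = f n := fun n => hjsurj (f n)
  set g : ℕ → G := fun n => Nat.rec (1 : G) (fun k _ => Classical.choose (hgex (k + 1))) n
    with hg
  have hg0 : g 0 = 1 := rfl
  have hjg : ∀ n, j (g n) = f n := by
    intro n
    cases n with
    | zero => simp [hg0, hf0]
    | succ k => exact Classical.choose_spec (hgex (k + 1))
  -- the index function
  set nf : G'' → ℕ := fun x => Nat.find (hex x) with hnf
  have hnf_mem : ∀ x, x ∈ f (nf x) • U := fun x => Nat.find_spec (hex x)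
  have hmemU : ∀ x, (f (nf x))⁻¹ * x ∈ U := by
    intro x
    have := hnf_mem x
    rwa [Set.mem_smul_set_iff_inv_smul_mem] at this
  -- modified local section, measurable everywhere
  set s' : G'' → G := U.piecewise s (fun _ => 1) with hs'
  have hs'U : ∀ x ∈ U, s' x = s x := fun x hx => Set.piecewise_eq_of_mem _ _ _ hx
  have hs'm : Measurable s' :=
    ContinuousOn.measurable_piecewise hsc continuousOn_const hU.measurableSet
  -- the global section
  set σ : G'' → G := fun x => g (nf x) * s' ((f (nf x))⁻¹ * x) with hσ
  have hσsec : ∀ x, j (σ x) = x := by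
    intro x
    have hm := hmemU x
    rw [hσ]
    simp only [map_mul, hjg, hs'U _ hm, hs _ hm]
    group
  have hnfm : Measurable nf := by
    apply measurable_find
    intro k
    exact (hU.smul (f k)).measurableSet
  have hσm : Measurable σ := by
    have hF : Measurable fun p : G'' × ℕ => g p.2 * s' ((f p.2)⁻¹ * p.1) := by
      apply measurable_from_prod_countable_left
      intro k
      exact ((Homeomorph.mulLeft (g k)).continuous.measurable).comp
        (hs'm.comp (Homeomorph.mulLeft (f k)⁻¹).continuous.measurable)
    have : σ = (fun p : G'' × ℕ => g p.2 * s' ((f p.2)⁻¹ * p.1)) ∘ fun x => (x, nf x) := rfl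
    rw [this]
    exact hF.comp (measurable_id.prodMk hnfm)
  refine ⟨σ, hσm, hσsec, U, hU, hU1, ?_⟩
  have hcongr : ∀ x ∈ U, σ x = s x := by
    intro x hx
    have h0 : nf x = 0 := by
      have : x ∈ f 0 • U := by rw [hf0]; simpa using hx
      exact Nat.eq_zero_of_le_zero (Nat.find_le this)
    rw [hσ]
    simp only [h0, hf0, hg0, inv_one, one_mul, hs'U _ hx]
  exact hsc.congr hcongr
end

section
/- Let G be a topological group and A a topological G-module, and suppose 0 → A' → A → A'' → 0 is a locally split short exact sequence of topological G-modules, with a chosen measurable section σ : A'' → A of the quotient map that is continuous near the identity. Then composition with the inclusion and the quotient map gives a short exact sequence of cochain complexes 0 → C•_lcm(G,A') → C•_lcm(G,A) → C•_lcm(G,A'') → 0, where C^n_lcm(G,B) is the group of measurable maps G^n → B that are continuous on a neighbourhood of the identity of G^n. -/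
/-- A locally continuous measurable `n`-cochain: a measurable map `G^n → B` which is
continuous on some open neighbourhood of the identity of `G^n`. -/
def IsLcmCochain {G B : Type*} [Group G] [TopologicalSpace G] [MeasurableSpace G]
    [TopologicalSpace B] [MeasurableSpace B] {n : ℕ} (f : (Fin n → G) → B) : Prop :=
  Measurable f ∧ ∃ U : Set (Fin n → G), IsOpen U ∧ (1 : Fin n → G) ∈ U ∧ ContinuousOn f U

/-- The standard inhomogeneous coboundary on cochains `G^n → B`. -/
def lcmCoboundary {G B : Type*} [Group G] [AddCommGroup B] [DistribMulAction G B] {n : ℕ}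
    (f : (Fin n → G) → B) : (Fin (n + 1) → G) → B :=
  fun g => g 0 • f (fun i => g i.succ) +
    ∑ j : Fin (n + 1), ((-1 : ℤ) ^ ((j : ℕ) + 1)) • f (Fin.contractNth j (· * ·) g)

/-- A locally split short exact sequence `0 → A' → A → A'' → 0` of
topological `G`-modules, with a chosen measurable section `σ` of the quotient map which is
continuous near the identity, induces in every degree a short exact sequence of the
complexes of locally continuous measurable cochains. -/
theorem stmt_6 {G A' A A'' : Type*} [Group G] [TopologicalSpace G] [IsTopologicalGroup G]
    [MeasurableSpace G] [BorelSpace G]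
    [AddCommGroup A'] [TopologicalSpace A'] [IsTopologicalAddGroup A']
    [MeasurableSpace A'] [BorelSpace A'] [DistribMulAction G A'] [ContinuousSMul G A']
    [AddCommGroup A] [TopologicalSpace A] [IsTopologicalAddGroup A]
    [MeasurableSpace A] [BorelSpace A] [DistribMulAction G A] [ContinuousSMul G A]
    [AddCommGroup A''] [TopologicalSpace A''] [IsTopologicalAddGroup A'']
    [MeasurableSpace A''] [BorelSpace A''] [DistribMulAction G A''] [ContinuousSMul G A'']
    (i : A' →+ A) (q : A →+ A'')
    (hieq : ∀ (g : G) (a : A'), i (g • a) = g • i a)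
    (hqeq : ∀ (g : G) (a : A), q (g • a) = g • q a)
    (hiemb : Topology.IsClosedEmbedding i) (hqc : Continuous q) (hqo : IsOpenMap q)
    (hqsurj : Function.Surjective q)
    (hexact : Set.range i = {a : A | q a = 0})
    (σ : A'' → A) (hσmeas : Measurable σ) (hσsec : ∀ x, q (σ x) = x)
    (hσcont : ∃ V : Set A'', IsOpen V ∧ (0 : A'') ∈ V ∧ ContinuousOn σ V) :
    ∀ n : ℕ,
      -- composition with `i` and `q` preserves locally continuous measurable cochains
      (∀ f' : (Fin n → G) → A', IsLcmCochain f' → IsLcmCochain (fun g => i (f' g))) ∧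
      (∀ f : (Fin n → G) → A, IsLcmCochain f → IsLcmCochain (fun g => q (f g))) ∧
      -- the induced maps are maps of complexes
      (∀ f' : (Fin n → G) → A',
        (fun g => i (lcmCoboundary f' g)) = lcmCoboundary (fun g => i (f' g))) ∧
      (∀ f : (Fin n → G) → A,
        (fun g => q (lcmCoboundary f g)) = lcmCoboundary (fun g => q (f g))) ∧
      -- exactness: injectivity on the left
      (∀ f' g' : (Fin n → G) → A',
        (fun g => i (f' g)) = (fun g => i (g' g)) → f' = g') ∧
      -- exactness in the middle
      (∀ f : (Fin n → G) → A, IsLcmCochain f → (∀ g, q (f g) = 0) →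
        ∃ f' : (Fin n → G) → A', IsLcmCochain f' ∧ ∀ g, i (f' g) = f g) ∧
      -- surjectivity on the right
      (∀ f'' : (Fin n → G) → A'', IsLcmCochain f'' →
        ∃ f : (Fin n → G) → A, IsLcmCochain f ∧ ∀ g, q (f g) = f'' g) := by
  obtain ⟨V, hVopen, hV0, hσV⟩ := hσcont
  have hic : Continuous i := hiemb.continuous
  have hime : MeasurableEmbedding i := hiemb.measurableEmbedding
  intro n
  refine ⟨?_, ?_, ?_, ?_, ?_, ?_, ?_⟩
  · rintro f' ⟨hm, U, hU, h1, hc⟩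
    exact ⟨hic.measurable.comp hm, U, hU, h1, hic.comp_continuousOn hc⟩
  · rintro f ⟨hm, U, hU, h1, hc⟩
    exact ⟨hqc.measurable.comp hm, U, hU, h1, hqc.comp_continuousOn hc⟩
  · intro f'
    funext g
    simp [lcmCoboundary, map_add, map_sum, map_zsmul, hieq]
  · intro f
    funext g
    simp [lcmCoboundary, map_add, map_sum, map_zsmul, hqeq]
  · intro f' g' h
    funext g
    exact hiemb.injective (congrFun h g)
  · rintro f ⟨hm, U, hU, h1, hc⟩ hq0
    have : Nonempty A' := ⟨0⟩
    refine ⟨fun g => Function.invFun i (f g), ?_, ?_⟩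
    · have heq : ∀ g, i (Function.invFun i (f g)) = f g := by
        intro g
        have : f g ∈ Set.range i := by rw [hexact]; exact hq0 g
        exact Function.invFun_eq this
      have hcomp : (⇑i ∘ fun g => Function.invFun (⇑i) (f g)) = f := funext heq
      constructor
      · exact hime.measurable_comp_iff.mp (by rw [hcomp]; exact hm)
      · refine ⟨U, hU, h1, ?_⟩
        rw [hiemb.isEmbedding.continuousOn_iff, hcomp]
        exact hc
    · intro g
      have : f g ∈ Set.range i := by rw [hexact]; exact hq0 g
      exact Function.invFun_eq this
  · rintro f'' ⟨hm, U, hU, h1, hc⟩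
    refine ⟨fun g => σ (f'' g - f'' 1) + σ (f'' 1), ?_, ?_⟩
    · constructor
      · exact (hσmeas.comp ((measurable_sub_const (f'' 1)).comp hm)).add_const _
      · set h : (Fin n → G) → A'' := fun g => f'' g - f'' 1 with hh
        have hhc : ContinuousOn h U := hc.sub continuousOn_const
        have hW : IsOpen (U ∩ h ⁻¹' V) := hhc.isOpen_inter_preimage hU hVopen
        refine ⟨U ∩ h ⁻¹' V, hW, ⟨h1, by simp [hh, hV0]⟩, ?_⟩
        have : ContinuousOn (fun g => σ (h g)) (U ∩ h ⁻¹' V) := by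
          refine ContinuousOn.comp hσV (hhc.mono Set.inter_subset_left) ?_
          exact fun x hx => hx.2
        exact this.add continuousOn_const
    · intro g
      simp [map_add, hσsec]
end

section
/- Let E and G be locally compact second countable topological groups (hence Polish). Every measurable group homomorphism σ : E → G is continuous (Banach's theorem). -/
open MeasureTheory Set Pointwise Filter Topology

/-- **Banach's theorem.** Every measurable group homomorphism between
locally compact second countable (hence Polish) topological groups is continuous. -/
theorem stmt_11 {E G : Type*}
    [Group E] [TopologicalSpace E] [IsTopologicalGroup E] [T2Space E]
    [LocallyCompactSpace E] [SecondCountableTopology E] [MeasurableSpace E] [BorelSpace E]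
    [Group G] [TopologicalSpace G] [IsTopologicalGroup G] [T2Space G]
    [LocallyCompactSpace G] [SecondCountableTopology G] [MeasurableSpace G] [BorelSpace G]
    (σ : E →* G) (hσ : Measurable σ) : Continuous σ := by
  apply continuous_of_continuousAt_one σ
  rw [ContinuousAt, map_one]
  intro V hV
  rw [Filter.mem_map]
  -- a small open neighborhood W of 1 with W / W ⊆ V
  obtain ⟨W₀, hW₀, hW₀V⟩ := exists_nhds_split_inv hV
  obtain ⟨W, hWsub, hWopen, hW1⟩ := mem_nhds_iff.1 hW₀
  -- countable dense set in G
  obtain ⟨D, Dcount, Ddense⟩ := TopologicalSpace.exists_countable_dense G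
  -- Haar measure on E
  set K₀ : TopologicalSpace.PositiveCompacts E := Classical.arbitrary _
  set μ : Measure E := Measure.haarMeasure K₀ with hμ
  have hK₀ : μ (K₀ : Set E) = 1 := Measure.haarMeasure_self
  -- the preimages of right translates W * {d}, d ∈ D, cover E
  have hcover : (K₀ : Set E) ⊆ ⋃ d ∈ D, σ ⁻¹' (W * {d}) := by
    intro x _
    have : (W⁻¹ * {σ x} : Set G).Nonempty := ⟨1⁻¹ * σ x, mul_mem_mul (inv_mem_inv.2 hW1) rfl⟩
    have hopen : IsOpen (W⁻¹ * {σ x} : Set G) := hWopen.inv.mul_right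
    obtain ⟨d, hdD, hd⟩ := Ddense.exists_mem_open hopen this
    obtain ⟨w, hw, g, hg, hwg⟩ := hd
    simp only [mem_singleton_iff] at hg
    subst hg
    refine mem_iUnion₂.2 ⟨d, hdD, mem_preimage.2 ⟨w⁻¹, Set.mem_inv.1 hw, d, rfl, ?_⟩⟩
    rw [← hwg]
    group
  -- one of these preimages meets K₀ in positive measure
  have hA : ∃ d ∈ D, 0 < μ (σ ⁻¹' (W * {d}) ∩ K₀) := by
    by_contra h
    push_neg at h
    have hnull : μ (⋃ d ∈ D, σ ⁻¹' (W * {d}) ∩ K₀) = 0 := by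
      refine (measure_biUnion_null_iff Dcount).2 fun d hd => le_antisymm ?_ zero_le
      exact h d hd
    have : μ (K₀ : Set E) ≤ μ (⋃ d ∈ D, σ ⁻¹' (W * {d}) ∩ K₀) := by
      apply measure_mono
      intro x hx
      obtain ⟨d, hdD, hd⟩ := mem_iUnion₂.1 (hcover hx)
      exact mem_iUnion₂.2 ⟨d, hdD, hd, hx⟩
    rw [hnull, hK₀] at this
    exact one_ne_zero (le_antisymm this zero_le)
  obtain ⟨d, _, hdpos⟩ := hA
  set A : Set E := σ ⁻¹' (W * {d}) ∩ K₀ with hAdef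
  have hAmeas : MeasurableSet A :=
    (hσ ((hWopen.mul_right).measurableSet)).inter K₀.isCompact.measurableSet
  -- Steinhaus theorem
  have hnhds : A / A ∈ 𝓝 (1 : E) := Measure.div_mem_nhds_one_of_haar_pos μ A hAmeas hdpos
  refine mem_of_superset hnhds ?_
  rintro x ⟨a, ha, b, hb, rfl⟩
  obtain ⟨wa, hwa, ga, hga, hwga⟩ := ha.1
  obtain ⟨wb, hwb, gb, hgb, hwgb⟩ := hb.1
  simp only [mem_singleton_iff] at hga hgb
  subst hga hgb
  have : σ (a / b) = wa / wb := by
    rw [map_div, ← hwga, ← hwgb]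
    simp [div_eq_mul_inv, mul_assoc]
  simp only [mem_preimage, this]
  exact hW₀V wa (hWsub hwa) wb (hWsub hwb)
end

section
/- Let G and A be locally compact second countable topological groups with A abelian and a continuous G-action on A by automorphisms. Let F : G × G → A be a measurable 2-cocycle (F(s₁,s₂) + F(s₁s₂,s₃) = s₁·F(s₂,s₃) + F(s₁,s₂s₃)) that is continuous on U_F × U_F for some open neighbourhood U_F of the identity in G. Define the group E = A × G with multiplication (a₁,s₁)(a₂,s₂) = (a₁ + s₁·a₂ + F(s₁,s₂), s₁s₂), and topologize E by declaring left translates of the sets U_A × U_G (U_A, U_G open identity neighbourhoods with F continuous on U_G × U_G) to be a neighbourhood base. Then for every x ∈ E, the inner conjugation map y ↦ x y x⁻¹ is continuous at the identity of E. -/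
/-- The twisted multiplication on `A × G` determined by a 2-cocycle `F`. -/
def cocycleMul {G A : Type*} [Group G] [AddCommGroup A] [DistribMulAction G A]
    (F : G → G → A) (p q : A × G) : A × G :=
  (p.1 + p.2 • q.1 + F p.2 q.2, p.2 * q.2)

/-- The inverse for the twisted multiplication on `A × G`. -/
def cocycleInv {G A : Type*} [Group G] [AddCommGroup A] [DistribMulAction G A]
    (F : G → G → A) (p : A × G) : A × G :=
  (-(p.2⁻¹ • p.1) - p.2⁻¹ • F p.2 p.2⁻¹, p.2⁻¹)

open Set Filter Topology MeasureTheory Pointwise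

section Aux

variable {G A : Type*} [Group G] [AddCommGroup A] [DistribMulAction G A]
  (F : G → G → A)

theorem cm12_assoc
    (hcoc : ∀ s₁ s₂ s₃ : G, F s₁ s₂ + F (s₁ * s₂) s₃ = s₁ • F s₂ s₃ + F s₁ (s₂ * s₃))
    (p q r : A × G) :
    cocycleMul F (cocycleMul F p q) r = cocycleMul F p (cocycleMul F q r) := by
  unfold cocycleMul
  refine Prod.ext ?_ (mul_assoc _ _ _)
  show p.1 + p.2 • q.1 + F p.2 q.2 + (p.2 * q.2) • r.1 + F (p.2 * q.2) r.2
      = p.1 + p.2 • (q.1 + q.2 • r.1 + F q.2 r.2) + F p.2 (q.2 * r.2)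
  calc p.1 + p.2 • q.1 + F p.2 q.2 + (p.2 * q.2) • r.1 + F (p.2 * q.2) r.2
      = p.1 + p.2 • q.1 + (p.2 * q.2) • r.1 + (F p.2 q.2 + F (p.2 * q.2) r.2) := by abel
    _ = p.1 + p.2 • q.1 + (p.2 * q.2) • r.1 + (p.2 • F q.2 r.2 + F p.2 (q.2 * r.2)) := by
        rw [hcoc]
    _ = p.1 + p.2 • (q.1 + q.2 • r.1 + F q.2 r.2) + F p.2 (q.2 * r.2) := by
        rw [smul_add, smul_add, mul_smul]; abel

theorem cm12_one (hnorm₁ : ∀ s, F 1 s = 0) (q : A × G) :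
    cocycleMul F ((0 : A), (1 : G)) q = q := by
  simp [cocycleMul, hnorm₁]

theorem cm12_inv_mul
    (hcoc : ∀ s₁ s₂ s₃ : G, F s₁ s₂ + F (s₁ * s₂) s₃ = s₁ • F s₂ s₃ + F s₁ (s₂ * s₃))
    (hnorm₁ : ∀ s, F 1 s = 0) (hnorm₂ : ∀ s, F s 1 = 0) (p : A × G) :
    cocycleMul F (cocycleInv F p) p = ((0 : A), (1 : G)) := by
  have h := hcoc p.2⁻¹ p.2 p.2⁻¹
  rw [inv_mul_cancel, mul_inv_cancel, hnorm₁, hnorm₂, add_zero, add_zero] at h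
  unfold cocycleMul cocycleInv
  refine Prod.ext ?_ (inv_mul_cancel _)
  show -(p.2⁻¹ • p.1) - p.2⁻¹ • F p.2 p.2⁻¹ + p.2⁻¹ • p.1 + F p.2⁻¹ p.2 = 0
  rw [h]; abel

theorem cm12_inv_cancel
    (hcoc : ∀ s₁ s₂ s₃ : G, F s₁ s₂ + F (s₁ * s₂) s₃ = s₁ • F s₂ s₃ + F s₁ (s₂ * s₃))
    (hnorm₁ : ∀ s, F 1 s = 0) (hnorm₂ : ∀ s, F s 1 = 0) (p q : A × G) :
    cocycleMul F (cocycleInv F p) (cocycleMul F p q) = q := by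
  rw [← cm12_assoc F hcoc, cm12_inv_mul F hcoc hnorm₁ hnorm₂, cm12_one F hnorm₁]

theorem cm12_conj_mul
    (hcoc : ∀ s₁ s₂ s₃ : G, F s₁ s₂ + F (s₁ * s₂) s₃ = s₁ • F s₂ s₃ + F s₁ (s₂ * s₃))
    (hnorm₁ : ∀ s, F 1 s = 0) (hnorm₂ : ∀ s, F s 1 = 0) (x y z : A × G) :
    cocycleMul F (cocycleMul F x (cocycleMul F y z)) (cocycleInv F x)
      = cocycleMul F (cocycleMul F (cocycleMul F x y) (cocycleInv F x))
          (cocycleMul F (cocycleMul F x z) (cocycleInv F x)) := by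
  simp only [cm12_assoc F hcoc, cm12_inv_cancel F hcoc hnorm₁ hnorm₂]

end Aux

theorem cm12_tube_small {X Y Z : Type*} [TopologicalSpace X] [TopologicalSpace Y]
    [TopologicalSpace Z] (f : X × Y → Z) (O : Set (X × Y)) (hO : IsOpen O)
    (hf : ContinuousOn f O) (x₀ : X) (K : Set Y) (hK : IsCompact K)
    (hsub : ∀ k ∈ K, (x₀, k) ∈ O) (W : Set Z) (hW : IsOpen W)
    (hfW : ∀ k ∈ K, f (x₀, k) ∈ W) :
    ∃ T, IsOpen T ∧ x₀ ∈ T ∧ ∀ t ∈ T, ∀ k ∈ K, (t, k) ∈ O ∧ f (t, k) ∈ W := by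
  have hO' : IsOpen (O ∩ f ⁻¹' W) := hf.isOpen_inter_preimage hO hW
  have hsub' : ({x₀} ×ˢ K : Set (X × Y)) ⊆ O ∩ f ⁻¹' W := by
    rintro ⟨x, y⟩ ⟨hx, hy⟩
    simp only [mem_singleton_iff] at hx
    subst hx
    exact ⟨hsub y hy, hfW y hy⟩
  obtain ⟨u, v, hu, hv, hxu, hKv, huv⟩ :=
    generalized_tube_lemma isCompact_singleton hK hO' hsub'
  exact ⟨u, hu, hxu rfl, fun t ht k hk => huv ⟨ht, hKv hk⟩⟩

theorem cm12_nhds_five {A : Type*} [AddCommGroup A] [TopologicalSpace A]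
    [IsTopologicalAddGroup A] (Z : Set A) (hZ : Z ∈ 𝓝 (0 : A)) :
    ∃ N : Set A, IsOpen N ∧ (0 : A) ∈ N ∧
      ∀ p ∈ N, ∀ q ∈ N, ∀ r ∈ N, ∀ v ∈ N, ∀ w ∈ N, p - q + (r + (v + w)) ∈ Z := by
  have h5 : Tendsto (fun z : A × A × A × A × A =>
      z.1 - z.2.1 + (z.2.2.1 + (z.2.2.2.1 + z.2.2.2.2)))
      (𝓝 (0, 0, 0, 0, 0)) (𝓝 (0 : A)) := by
    have : Continuous (fun z : A × A × A × A × A =>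
        z.1 - z.2.1 + (z.2.2.1 + (z.2.2.2.1 + z.2.2.2.2))) := by fun_prop
    simpa using this.tendsto (0, 0, 0, 0, 0)
  have hmem := h5 hZ
  rw [nhds_prod_eq, nhds_prod_eq, nhds_prod_eq, nhds_prod_eq] at hmem
  obtain ⟨s1, hs1, s2, hs2, hsub⟩ := Filter.mem_prod_iff.1 hmem
  obtain ⟨s3, hs3, s4, hs4, hsub2⟩ := Filter.mem_prod_iff.1 hs2
  obtain ⟨s5, hs5, s6, hs6, hsub3⟩ := Filter.mem_prod_iff.1 hs4
  obtain ⟨s7, hs7, s8, hs8, hsub4⟩ := Filter.mem_prod_iff.1 hs6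
  set N0 := s1 ∩ s3 ∩ s5 ∩ s7 ∩ s8 with hN0
  have hN0mem : N0 ∈ 𝓝 (0 : A) :=
    inter_mem (inter_mem (inter_mem (inter_mem hs1 hs3) hs5) hs7) hs8
  refine ⟨interior N0, isOpen_interior, mem_interior_iff_mem_nhds.2 hN0mem, ?_⟩
  intro p hp q hq r hr v hv w hw
  have hp' := interior_subset hp; have hq' := interior_subset hq
  have hr' := interior_subset hr; have hv' := interior_subset hv
  have hw' := interior_subset hw
  have : ((p, q, r, v, w) : A × A × A × A × A) ∈ s1 ×ˢ s2 :=
    ⟨hp'.1.1.1.1, hsub2 ⟨hq'.1.1.1.2, hsub3 ⟨hr'.1.1.2, hsub4 ⟨hv'.1.2, hw'.2⟩⟩⟩⟩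
  exact hsub this

theorem cm12_nhds_two {A : Type*} [AddCommGroup A] [TopologicalSpace A]
    [IsTopologicalAddGroup A] (Z : Set A) (hZ : Z ∈ 𝓝 (0 : A)) :
    ∃ N : Set A, IsOpen N ∧ (0 : A) ∈ N ∧ ∀ p ∈ N, ∀ q ∈ N, p + q ∈ Z := by
  have h2 : Tendsto (fun z : A × A => z.1 + z.2) (𝓝 (0, 0)) (𝓝 (0 : A)) := by
    simpa using (continuous_add (M := A)).tendsto (0, 0)
  have hmem := h2 hZ
  rw [nhds_prod_eq] at hmem
  obtain ⟨s1, hs1, s2, hs2, hsub⟩ := Filter.mem_prod_iff.1 hmem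
  refine ⟨interior (s1 ∩ s2), isOpen_interior,
    mem_interior_iff_mem_nhds.2 (inter_mem hs1 hs2), ?_⟩
  intro p hp q hq
  have : ((p, q) : A × A) ∈ s1 ×ˢ s2 := ⟨(interior_subset hp).1, (interior_subset hq).2⟩
  exact hsub this

/-- Let `G`, `A` be locally compact second countable groups, `A` a
continuous `G`-module, and `F` a measurable normalized 2-cocycle continuous on
`U_F × U_F`. In the extension `E = A ×_F G`, whose topology has as a neighbourhood base
at the identity the products `U_A × U_G` with `F` continuous on `U_G × U_G` (and their
left translates elsewhere), inner conjugation by any element `x` is continuous at the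
identity: every basic neighbourhood of the identity contains the conjugate of some basic
neighbourhood. -/
theorem stmt_12 {G A : Type*}
    [Group G] [TopologicalSpace G] [IsTopologicalGroup G]
    [LocallyCompactSpace G] [SecondCountableTopology G] [MeasurableSpace G] [BorelSpace G]
    [AddCommGroup A] [TopologicalSpace A] [IsTopologicalAddGroup A]
    [LocallyCompactSpace A] [SecondCountableTopology A] [MeasurableSpace A] [BorelSpace A]
    [DistribMulAction G A] [ContinuousSMul G A]
    (F : G → G → A) (hFmeas : Measurable (Function.uncurry F))
    (hcoc : ∀ s₁ s₂ s₃ : G, F s₁ s₂ + F (s₁ * s₂) s₃ = s₁ • F s₂ s₃ + F s₁ (s₂ * s₃))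
    (hnorm₁ : ∀ s, F 1 s = 0) (hnorm₂ : ∀ s, F s 1 = 0)
    (U_F : Set G) (hUF : IsOpen U_F) (hUF1 : (1 : G) ∈ U_F)
    (hFcont : ContinuousOn (Function.uncurry F) (U_F ×ˢ U_F))
    (x : A × G) (UA : Set A) (UG : Set G)
    (hUA : IsOpen UA) (hUA0 : (0 : A) ∈ UA) (hUG : IsOpen UG) (hUG1 : (1 : G) ∈ UG)
    (hFUG : ContinuousOn (Function.uncurry F) (UG ×ˢ UG)) :
    ∃ (VA : Set A) (VG : Set G), IsOpen VA ∧ (0 : A) ∈ VA ∧ IsOpen VG ∧ (1 : G) ∈ VG ∧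
      ContinuousOn (Function.uncurry F) (VG ×ˢ VG) ∧
      ∀ y ∈ VA ×ˢ VG, cocycleMul F (cocycleMul F x y) (cocycleInv F x) ∈ UA ×ˢ UG := by
  obtain ⟨a, s⟩ := x
  -- the conjugating data
  set u : G → G := fun t => s * t * s⁻¹ with hu_def
  set h : G → A := fun t =>
    a + F s t + (s * t) • (-(s⁻¹ • a) - s⁻¹ • F s s⁻¹) + F (s * t) s⁻¹ with hh_def
  have hu_cont : Continuous u := by
    rw [hu_def]; exact (continuous_const.mul continuous_id).mul continuous_const
  have hu_one : u 1 = 1 := by rw [hu_def]; simp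
  -- conjugation formula
  have hconj : ∀ b t, cocycleMul F (cocycleMul F (a, s) (b, t)) (cocycleInv F (a, s))
      = (s • b + h t, u t) := by
    intro b t
    unfold cocycleMul cocycleInv
    simp only
    refine Prod.ext ?_ rfl
    show a + s • b + F s t + (s * t) • (-(s⁻¹ • a) - s⁻¹ • F s s⁻¹) + F (s * t) s⁻¹
        = s • b + h t
    rw [hh_def]; simp only [add_assoc]; exact add_left_comm _ _ _
  -- the key multiplicativity relation for h
  have key : ∀ t₁ t₂ : G, s • F t₁ t₂ + h (t₁ * t₂)
      = h t₁ + u t₁ • h t₂ + F (u t₁) (u t₂) := by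
    intro t₁ t₂
    have hmulE : cocycleMul F ((0 : A), t₁) ((0 : A), t₂) = (F t₁ t₂, t₁ * t₂) := by
      simp [cocycleMul]
    have hcm := cm12_conj_mul F hcoc hnorm₁ hnorm₂ (a, s) (0, t₁) (0, t₂)
    rw [hmulE, hconj (F t₁ t₂) (t₁ * t₂), hconj 0 t₁, hconj 0 t₂] at hcm
    simp only [smul_zero, zero_add] at hcm
    have h1 := congrArg Prod.fst hcm
    simpa [cocycleMul] using h1
  -- measurability of h
  have hmeas : Measurable h := by
    rw [hh_def]
    have hm1 : Measurable fun t : G => F s t :=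
      hFmeas.comp (measurable_const.prodMk measurable_id)
    have hm2 : Measurable fun t : G => F (s * t) s⁻¹ :=
      hFmeas.comp ((measurable_id.const_mul s).prodMk measurable_const)
    have hm3 : Measurable fun t : G => (s * t) • (-(s⁻¹ • a) - s⁻¹ • F s s⁻¹) :=
      (Continuous.smul (continuous_const.mul continuous_id) continuous_const).measurable
    exact ((measurable_const.add hm1).add hm3).add hm2
  -- main analytic step: h tends to 0 at 1
  have hten : Tendsto h (𝓝 (1 : G)) (𝓝 (0 : A)) := by
    rw [Filter.tendsto_def]
    intro Z hZ
    obtain ⟨N, hNopen, hN0, hNprop⟩ := cm12_nhds_five Z hZ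
    obtain ⟨KA, hKAcomp, hKA0, hKAN⟩ := exists_compact_subset hNopen hN0
    set W := interior KA with hW_def
    have hWopen : IsOpen W := isOpen_interior
    have hW0 : (0 : A) ∈ W := hKA0
    have hWN : W ⊆ N := fun z hz => hKAN (interior_subset hz)
    -- small compact neighbourhood in G
    have hU'open : IsOpen (U_F ∩ u ⁻¹' U_F) := hUF.inter (hUF.preimage hu_cont)
    have h1U' : (1 : G) ∈ U_F ∩ u ⁻¹' U_F := ⟨hUF1, by rw [mem_preimage, hu_one]; exact hUF1⟩
    obtain ⟨C₀, hC₀comp, hC₀1, hC₀sub⟩ := exists_compact_subset hU'open h1U'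
    set V₀ := interior C₀ with hV₀_def
    have hV₀open : IsOpen V₀ := isOpen_interior
    have h1V₀ : (1 : G) ∈ V₀ := hC₀1
    have hC₀UF : C₀ ⊆ U_F := fun z hz => (hC₀sub hz).1
    have hC₀uUF : ∀ z ∈ C₀, u z ∈ U_F := fun z hz => (hC₀sub hz).2
    -- Haar measure
    let μ : Measure G := MeasureTheory.Measure.haar
    have hV₀pos : 0 < μ V₀ := hV₀open.measure_pos μ ⟨1, h1V₀⟩
    -- countable dense set
    obtain ⟨D, hDcount, hDdense⟩ := TopologicalSpace.exists_countable_dense A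
    set Kd : A → Set G := fun d => V₀ ∩ h ⁻¹' ((d + ·) '' W) with hKd_def
    have hcover : V₀ ⊆ ⋃ d ∈ D, Kd d := by
      intro k hk
      have hOopen : IsOpen ((fun w => h k - w) '' W) :=
        (Homeomorph.subLeft (h k)).isOpen_image.2 hWopen
      have hOne : ((fun w => h k - w) '' W).Nonempty := ⟨h k, 0, hW0, by simp⟩
      obtain ⟨d, hdD, hdO⟩ := hDdense.exists_mem_open hOopen hOne
      obtain ⟨w, hwW, hweq⟩ := hdO
      refine mem_biUnion hdD ⟨hk, ?_⟩
      refine ⟨w, hwW, ?_⟩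
      have hweq' : h k - w = d := hweq
      show d + w = h k
      rw [← hweq']
      abel
    -- a translate class of positive measure
    have hKdmeas : ∀ d : A, MeasurableSet (Kd d) := by
      intro d
      have : IsOpen ((d + ·) '' W) := (Homeomorph.addLeft d).isOpen_image.2 hWopen
      exact hV₀open.measurableSet.inter (hmeas this.measurableSet)
    have hexd : ∃ d ∈ D, μ (Kd d) ≠ 0 := by
      by_contra hcon
      push_neg at hcon
      have hz : μ (⋃ d ∈ D, Kd d) = 0 := (measure_biUnion_null_iff hDcount).2 hcon
      have hle : μ V₀ ≤ μ (⋃ d ∈ D, Kd d) := measure_mono hcover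
      rw [hz] at hle
      exact hV₀pos.ne' (le_antisymm hle zero_le)
    obtain ⟨d, hdD, hKdne⟩ := hexd
    have hKdpos : 0 < μ (Kd d) := pos_iff_ne_zero.2 hKdne
    -- Steinhaus
    have hdiv : Kd d / Kd d ∈ 𝓝 (1 : G) :=
      Measure.div_mem_nhds_one_of_haar_pos μ (Kd d) (hKdmeas d) hKdpos
    -- tube lemma applications
    -- (b) : b ↦ b - u t • b small for b in the compact translate d + KA
    obtain ⟨Tb, hTbopen, h1Tb, hTbprop⟩ :=
      cm12_tube_small (fun p : G × A => p.2 - u p.1 • p.2) univ isOpen_univ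
        ((continuous_snd.sub ((hu_cont.comp continuous_fst).smul continuous_snd)).continuousOn)
        1 ((d + ·) '' KA) (hKAcomp.image (continuous_add_left d))
        (fun _ _ => mem_univ _) N hNopen
        (by intro k _; simpa [hu_one] using hN0)
    -- (c) : -F (u t) (u k) small for k ∈ C₀
    obtain ⟨Tc, hTcopen, h1Tc, hTcprop⟩ :=
      cm12_tube_small (fun p : G × G => -F (u p.1) (u p.2))
        ((u ⁻¹' U_F) ×ˢ (u ⁻¹' U_F))
        ((hUF.preimage hu_cont).prod (hUF.preimage hu_cont))
        (((hFcont.comp (((hu_cont.comp continuous_fst).prodMk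
            (hu_cont.comp continuous_snd)).continuousOn)
          (fun p hp => ⟨hp.1, hp.2⟩))).neg)
        1 C₀ hC₀comp
        (fun k hk => ⟨by rw [mem_preimage, hu_one]; exact hUF1, hC₀uUF k hk⟩)
        N hNopen
        (by intro k _; simp [hu_one, hnorm₁, hN0])
    -- (d) : s • F t k small for k ∈ C₀
    obtain ⟨Td, hTdopen, h1Td, hTdprop⟩ :=
      cm12_tube_small (fun p : G × G => s • F p.1 p.2) (U_F ×ˢ U_F) (hUF.prod hUF)
        (hFcont.const_smul s) 1 C₀ hC₀comp
        (fun k hk => ⟨hUF1, hC₀UF hk⟩) N hNopen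
        (by intro k _; simp [hnorm₁, hN0])
    -- final neighbourhood
    have hT : (Kd d / Kd d) ∩ (Tb ∩ (Tc ∩ Td)) ∈ 𝓝 (1 : G) :=
      inter_mem hdiv (inter_mem (hTbopen.mem_nhds h1Tb)
        (inter_mem (hTcopen.mem_nhds h1Tc) (hTdopen.mem_nhds h1Td)))
    refine mem_of_superset hT ?_
    rintro t ⟨htdiv, htb, htc, htd⟩
    obtain ⟨k₁, hk₁, k₂, hk₂, hdiveq⟩ := Set.mem_div.1 htdiv
    have hk1eq : k₁ = t * k₂ := (div_eq_iff_eq_mul).1 hdiveq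
    obtain ⟨hk₁V, w₁, hw₁W, hw₁eq⟩ := hk₁
    obtain ⟨hk₂V, w₂, hw₂W, hw₂eq⟩ := hk₂
    have hw₁eq' : d + w₁ = h k₁ := hw₁eq
    have hw₂eq' : d + w₂ = h k₂ := hw₂eq
    -- rearrange the key identity
    have hkey := key t k₂
    rw [← hk1eq] at hkey
    have hform : h t = (h k₁ - d) - (h k₂ - d)
        + ((h k₂ - u t • h k₂) + (-(F (u t) (u k₂)) + s • F t k₂)) := by
      have h2 : h t = s • F t k₂ + h k₁ - u t • h k₂ - F (u t) (u k₂) := by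
        rw [eq_sub_iff_add_eq, eq_sub_iff_add_eq, hkey]; abel
      rw [h2]; abel
    show h t ∈ Z
    rw [hform]
    have hp1 : h k₁ - d ∈ N := by rw [← hw₁eq']; simpa using hWN hw₁W
    have hp2 : h k₂ - d ∈ N := by rw [← hw₂eq']; simpa using hWN hw₂W
    have hp3 : h k₂ - u t • h k₂ ∈ N := by
      have hk₂mem : h k₂ ∈ (d + ·) '' KA := ⟨w₂, interior_subset hw₂W, hw₂eq⟩
      exact (hTbprop t htb (h k₂) hk₂mem).2
    have hp4 : -(F (u t) (u k₂)) ∈ N := (hTcprop t htc k₂ (interior_subset hk₂V)).2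
    have hp5 : s • F t k₂ ∈ N := (hTdprop t htd k₂ (interior_subset hk₂V)).2
    exact hNprop _ hp1 _ hp2 _ hp3 _ hp4 _ hp5
  -- assemble the final neighbourhoods
  obtain ⟨N1, hN1open, hN10, hN1prop⟩ := cm12_nhds_two UA (hUA.mem_nhds hUA0)
  refine ⟨(fun b => s • b) ⁻¹' N1,
    interior (h ⁻¹' N1) ∩ (u ⁻¹' UG ∩ U_F), ?_, ?_, ?_, ?_, ?_, ?_⟩
  · exact hN1open.preimage (continuous_const_smul s)
  · show s • (0 : A) ∈ N1; rw [smul_zero]; exact hN10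
  · exact isOpen_interior.inter ((hUG.preimage hu_cont).inter hUF)
  · refine ⟨mem_interior_iff_mem_nhds.2 (hten (hN1open.mem_nhds hN10)), ?_, hUF1⟩
    rw [mem_preimage]
    have : u 1 = 1 := by rw [hu_def]; simp
    rw [this]; exact hUG1
  · exact hFcont.mono (Set.prod_mono (fun z hz => hz.2.2) (fun z hz => hz.2.2))
  · rintro ⟨b, t⟩ ⟨hb, ht⟩
    rw [hconj b t]
    refine ⟨?_, ht.2.1⟩
    have ht1 : t ∈ h ⁻¹' N1 := interior_subset ht.1
    exact hN1prop _ hb _ ht1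
end

section
/- Let G and A be locally compact second countable topological groups, A abelian, with a continuous action of G on A. If a measurable 2-cocycle F : G × G → A that is continuous near the identity is the coboundary of some measurable 1-cochain (i.e. its class is trivial in H²_m(G,A)), then F is the coboundary of a measurable 1-cochain that is continuous near the identity (i.e. its class is trivial in H²_lcm(G,A)). Equivalently, the natural map H²_lcm(G,A) → H²_m(G,A) is injective. -/
open Filter Set MeasureTheory Topology Function Pointwise

private lemma auto_cont_aux {G A : Type*}
    [Group G] [TopologicalSpace G] [IsTopologicalGroup G]
    [LocallyCompactSpace G] [SecondCountableTopology G] [MeasurableSpace G] [BorelSpace G]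
    [AddCommGroup A] [TopologicalSpace A] [IsTopologicalAddGroup A]
    [LocallyCompactSpace A] [SecondCountableTopology A] [MeasurableSpace A] [BorelSpace A]
    [DistribMulAction G A] [ContinuousSMul G A]
    (F : G → G → A) (h : G → A) (hmeas : Measurable h)
    (U : Set G) (hUo : IsOpen U) (hU1 : (1:G) ∈ U)
    (hFc : ContinuousOn (Function.uncurry F) (U ×ˢ U))
    (hh : ∀ s t : G, h (s * t) = h s + s • h t - F s t) :
    ContinuousAt h 1 := by
  have hF11 : F 1 1 = h 1 := by
    have e := hh 1 1
    rw [one_mul, one_smul, eq_sub_iff_add_eq] at e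
    exact add_left_cancel e
  have hFat : ContinuousAt (Function.uncurry F) (1, 1) :=
    hFc.continuousAt ((hUo.prod hUo).mem_nhds ⟨hU1, hU1⟩)
  rw [ContinuousAt, Filter.tendsto_def]
  intro N hN
  have hN' : (fun x : A => h 1 + x) ⁻¹' N ∈ 𝓝 (0 : A) := by
    have hc : ContinuousAt (fun x : A => h 1 + x) 0 :=
      (continuous_const.add continuous_id).continuousAt
    apply hc.preimage_mem_nhds
    simpa using hN
  obtain ⟨W1, hW1, hW1h⟩ := exists_nhds_zero_half hN'
  obtain ⟨W2, hW2, hW2h⟩ := exists_nhds_zero_half hW1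
  obtain ⟨W3, hW3, hW3h⟩ := exists_nhds_zero_half hW2
  have hW3' : (fun x : A => -x) ⁻¹' W3 ∈ 𝓝 (0:A) := by
    apply (continuous_neg.continuousAt (x := (0:A))).preimage_mem_nhds
    simpa using hW3
  set W : Set A := W3 ∩ (fun x : A => -x) ⁻¹' W3 with hWdef
  have hW : W ∈ 𝓝 (0:A) := Filter.inter_mem hW3 hW3'
  have hWneg : ∀ x ∈ W, -x ∈ W := fun x hx => ⟨hx.2, by simpa using hx.1⟩
  have hWW3 : W ⊆ W3 := Set.inter_subset_left
  have h0W3 : (0:A) ∈ W3 := mem_of_mem_nhds hW3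
  have hsum : ∀ w1 w2 w3 w4 w5 w6 w7 : A, w1 ∈ W → w2 ∈ W → w3 ∈ W → w4 ∈ W → w5 ∈ W →
      w6 ∈ W → w7 ∈ W → h 1 + (w1 + w2 + w3 + w4 + w5 + w6 + w7) ∈ N := by
    intro w1 w2 w3 w4 w5 w6 w7 m1 m2 m3 m4 m5 m6 m7
    have key : w1 + w2 + w3 + w4 + w5 + w6 + w7 ∈ (fun x : A => h 1 + x) ⁻¹' N := by
      have e : w1 + w2 + w3 + w4 + w5 + w6 + w7
          = ((w1 + w2) + (w3 + w4)) + ((w5 + w6) + (w7 + 0)) := by abel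
      rw [e]
      exact hW1h _ (hW2h _ (hW3h _ (hWW3 m1) _ (hWW3 m2)) _ (hW3h _ (hWW3 m3) _ (hWW3 m4)))
        _ (hW2h _ (hW3h _ (hWW3 m5) _ (hWW3 m6)) _ (hW3h _ (hWW3 m7) _ h0W3))
    exact key
  -- a neighbourhood for the smul map at (1,0)
  obtain ⟨M₁, hM₁, W₁, hW₁, hMW⟩ : ∃ M₁ ∈ 𝓝 (1:G), ∃ W₁ ∈ 𝓝 (0:A),
      ∀ g ∈ M₁, ∀ x ∈ W₁, g • x ∈ W := by
    have hc : ContinuousAt (fun p : G × A => p.1 • p.2) (1, 0) := continuous_smul.continuousAt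
    have hpre : (fun p : G × A => p.1 • p.2) ⁻¹' W ∈ 𝓝 ((1:G), (0:A)) := by
      apply hc.preimage_mem_nhds
      simpa using hW
    rw [mem_nhds_prod_iff] at hpre
    obtain ⟨M₁, hM₁, W₁, hW₁, hsub⟩ := hpre
    exact ⟨M₁, hM₁, W₁, hW₁, fun g hg x hx => hsub (Set.mk_mem_prod hg hx)⟩
  obtain ⟨O, hOsub, hOopen, hO0⟩ := mem_nhds_iff.mp (Filter.inter_mem hW hW₁)
  -- neighbourhoods in G from the continuity of F near the identity
  have hVa : {v : G | F v⁻¹ v - h 1 ∈ W₁} ∈ 𝓝 (1:G) := by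
    have hFat' : ContinuousAt (Function.uncurry F) ((1:G)⁻¹, (1:G)) := by
      rw [inv_one]; exact hFat
    have hg : Continuous (fun v : G => ((v⁻¹ : G), v)) := continuous_inv.prodMk continuous_id
    have hc : ContinuousAt (fun v : G => F v⁻¹ v - h 1) 1 := by
      have h2 : ContinuousAt (fun v : G => F v⁻¹ v) 1 := by
        have := ContinuousAt.comp (x := (1:G)) (f := fun v : G => ((v⁻¹ : G), v))
          (g := Function.uncurry F) hFat' hg.continuousAt
        simpa [Function.comp_def] using this
      exact ContinuousAt.sub h2 continuousAt_const
    apply hc.preimage_mem_nhds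
    show W₁ ∈ 𝓝 (F (1:G)⁻¹ 1 - h 1)
    rw [inv_one, hF11, sub_self]
    exact hW₁
  obtain ⟨Vb1, hVb1, Vb2, hVb2, hVb⟩ : ∃ Vb1 ∈ 𝓝 (1:G), ∃ Vb2 ∈ 𝓝 (1:G),
      ∀ u ∈ Vb1, ∀ v ∈ Vb2, h 1 - F u v⁻¹ ∈ W := by
    have hFat' : ContinuousAt (Function.uncurry F) ((1:G), (1:G)⁻¹) := by
      rw [inv_one]; exact hFat
    have hg : Continuous (fun p : G × G => (p.1, (p.2⁻¹ : G))) :=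
      continuous_fst.prodMk continuous_snd.inv
    have hc : ContinuousAt (fun p : G × G => h 1 - F p.1 p.2⁻¹) (1, 1) := by
      have h2 : ContinuousAt (fun p : G × G => F p.1 p.2⁻¹) (1, 1) := by
        have := ContinuousAt.comp (x := ((1:G), (1:G))) (f := fun p : G × G => (p.1, (p.2⁻¹ : G)))
          (g := Function.uncurry F) hFat' hg.continuousAt
        simpa [Function.comp_def] using this
      exact ContinuousAt.sub continuousAt_const h2
    have hpre : (fun p : G × G => h 1 - F p.1 p.2⁻¹) ⁻¹' W ∈ 𝓝 ((1:G), (1:G)) := by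
      apply hc.preimage_mem_nhds
      show W ∈ 𝓝 (h 1 - F (1:G) (1:G)⁻¹)
      rw [inv_one, hF11, sub_self]
      exact hW
    rw [mem_nhds_prod_iff] at hpre
    obtain ⟨Vb1, hVb1, Vb2, hVb2, hsub⟩ := hpre
    exact ⟨Vb1, hVb1, Vb2, hVb2, fun u hu v hv => hsub (Set.mk_mem_prod hu hv)⟩
  have hVc : {u : G | u • h 1 - h 1 ∈ W} ∈ 𝓝 (1:G) := by
    have hc : ContinuousAt (fun u : G => u • h 1 - h 1) 1 :=
      ContinuousAt.sub (continuousAt_id.smul continuousAt_const) continuousAt_const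
    apply hc.preimage_mem_nhds
    show W ∈ 𝓝 ((1:G) • h 1 - h 1)
    rw [one_smul, sub_self]
    exact hW
  obtain ⟨V, hVsub, hVopen, hV1⟩ := mem_nhds_iff.mp
    (Filter.inter_mem (Filter.inter_mem (Filter.inter_mem hVa hVb1)
      (Filter.inter_mem hVb2 hVc)) hM₁)
  -- find a translate with positive Haar measure
  obtain ⟨D, hDcount, hDdense⟩ := TopologicalSpace.exists_countable_dense A
  set μ : Measure G := Measure.haar with hμdef
  have hcover : V ⊆ ⋃ a ∈ D, (V ∩ h ⁻¹' ((fun x => x - a) ⁻¹' O)) := by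
    intro t ht
    have hBopen : IsOpen ((fun b : A => h t - b) ⁻¹' O) :=
      hOopen.preimage (continuous_const.sub continuous_id)
    have hBne : ((fun b : A => h t - b) ⁻¹' O).Nonempty := ⟨h t, by simpa using hO0⟩
    obtain ⟨a, haD, haB⟩ := hDdense.exists_mem_open hBopen hBne
    exact Set.mem_biUnion haD ⟨ht, by simpa using haB⟩
  have hVne : μ V ≠ 0 := hVopen.measure_ne_zero μ ⟨1, hV1⟩
  have hex : ∃ a ∈ D, μ (V ∩ h ⁻¹' ((fun x => x - a) ⁻¹' O)) ≠ 0 := by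
    by_contra hall
    push_neg at hall
    exact hVne (measure_mono_null hcover ((measure_biUnion_null_iff hDcount).mpr hall))
  obtain ⟨a, haD, hSpos⟩ := hex
  set S : Set G := V ∩ h ⁻¹' ((fun x => x - a) ⁻¹' O) with hSdef
  have hSmeas : MeasurableSet S :=
    hVopen.measurableSet.inter (hmeas (hOopen.preimage (continuous_id.sub continuous_const)).measurableSet)
  have hSdiv : S / S ∈ 𝓝 (1:G) :=
    MeasureTheory.Measure.div_mem_nhds_one_of_haar_pos μ S hSmeas (pos_iff_ne_zero.mpr hSpos)
  have hT3 : {s : G | a - s • a ∈ W} ∈ 𝓝 (1:G) := by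
    have hc : ContinuousAt (fun s : G => a - s • a) 1 :=
      ContinuousAt.sub continuousAt_const (continuousAt_id.smul continuousAt_const)
    apply hc.preimage_mem_nhds
    show W ∈ 𝓝 (a - (1:G) • a)
    rw [one_smul, sub_self]
    exact hW
  apply Filter.mem_of_superset
    (Filter.inter_mem hSdiv (Filter.inter_mem hT3 hM₁))
  rintro s ⟨hsSS, hsT3, hsM₁⟩
  rw [Set.mem_div] at hsSS
  obtain ⟨u, huS, v, hvS, hs⟩ := hsSS
  have hs' : u * v⁻¹ = s := by rw [← div_eq_mul_inv]; exact hs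
  have huV := hVsub huS.1
  have hvV := hVsub hvS.1
  have huO : h u - a ∈ O := huS.2
  have hvO : h v - a ∈ O := hvS.2
  have e1 : h s = h u + u • h v⁻¹ - F u v⁻¹ := by rw [← hs']; exact hh u v⁻¹
  have e2 : h v⁻¹ = h 1 - v⁻¹ • h v + F v⁻¹ v := by
    have e := hh v⁻¹ v
    rw [inv_mul_cancel] at e
    rw [e]; abel
  have key : h s = h 1 + ((h u - a) + (-(s • (h v - a))) + (a - s • a)
      + (u • h 1 - h 1) + (u • (F v⁻¹ v - h 1)) + (u • h 1 - h 1) + (h 1 - F u v⁻¹)) := by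
    rw [e1, e2]
    simp only [smul_add, smul_sub]
    rw [← mul_smul, hs']
    abel
  have m1 : h u - a ∈ W := (hOsub huO).1
  have m2 : -(s • (h v - a)) ∈ W := hWneg _ (hMW s hsM₁ _ (hOsub hvO).2)
  have m3 : a - s • a ∈ W := hsT3
  have m4 : u • h 1 - h 1 ∈ W := huV.1.2.2
  have m5 : u • (F v⁻¹ v - h 1) ∈ W := hMW u huV.2 _ hvV.1.1.1
  have m7 : h 1 - F u v⁻¹ ∈ W := hVb u huV.1.1.2 v hvV.1.2.1
  show h s ∈ N
  rw [key]
  exact hsum _ _ _ _ _ _ _ m1 m2 m3 m4 m5 m4 m7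

/-- The natural map `H²_lcm(G,A) → H²_m(G,A)` is injective: if a
measurable 2-cocycle `F` which is continuous on a neighbourhood of the identity is the
coboundary of a measurable 1-cochain, then it is the coboundary of a measurable 1-cochain
which is continuous on a neighbourhood of the identity. -/
theorem stmt_13 {G A : Type*}
    [Group G] [TopologicalSpace G] [IsTopologicalGroup G]
    [LocallyCompactSpace G] [SecondCountableTopology G] [MeasurableSpace G] [BorelSpace G]
    [AddCommGroup A] [TopologicalSpace A] [IsTopologicalAddGroup A]
    [LocallyCompactSpace A] [SecondCountableTopology A] [MeasurableSpace A] [BorelSpace A]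
    [DistribMulAction G A] [ContinuousSMul G A]
    (F : G → G → A) (hFmeas : Measurable (Function.uncurry F))
    (hcoc : ∀ s₁ s₂ s₃ : G, F s₁ s₂ + F (s₁ * s₂) s₃ = s₁ • F s₂ s₃ + F s₁ (s₂ * s₃))
    (hFcont : ∃ U : Set G, IsOpen U ∧ (1 : G) ∈ U ∧
      ContinuousOn (Function.uncurry F) (U ×ˢ U))
    (htriv : ∃ h : G → A, Measurable h ∧
      ∀ s t : G, F s t = s • h t - h (s * t) + h s) :
    ∃ h : G → A, Measurable h ∧
      (∃ U : Set G, IsOpen U ∧ (1 : G) ∈ U ∧ ContinuousOn h U) ∧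
      ∀ s t : G, F s t = s • h t - h (s * t) + h s := by
  obtain ⟨U, hUo, hU1, hFc⟩ := hFcont
  obtain ⟨h, hmeas, hco⟩ := htriv
  have hh : ∀ s t : G, h (s * t) = h s + s • h t - F s t := by
    intro s t
    rw [hco s t]
    abel
  have hcont1 : ContinuousAt h 1 := auto_cont_aux F h hmeas U hUo hU1 hFc hh
  refine ⟨h, hmeas, ⟨U, hUo, hU1, fun s₀ hs₀ => ContinuousAt.continuousWithinAt ?_⟩, hco⟩
  -- continuity of h at each point s₀ of U
  have hrep : ∀ x : G, h x = h s₀ + s₀ • h (s₀⁻¹ * x) - F s₀ (s₀⁻¹ * x) := by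
    intro x
    have := hh s₀ (s₀⁻¹ * x)
    rwa [mul_inv_cancel_left] at this
  have c1 : ContinuousAt (fun x : G => s₀⁻¹ * x) s₀ :=
    (continuous_const.mul continuous_id).continuousAt
  have c2 : ContinuousAt (fun x : G => h (s₀⁻¹ * x)) s₀ := by
    have h1 : ContinuousAt h (s₀⁻¹ * s₀) := by rw [inv_mul_cancel]; exact hcont1
    exact ContinuousAt.comp (x := s₀) (f := fun x : G => s₀⁻¹ * x) (g := h) h1 c1
  have c4 : ContinuousAt (fun x : G => F s₀ (s₀⁻¹ * x)) s₀ := by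
    have hFat : ContinuousAt (Function.uncurry F) (s₀, s₀⁻¹ * s₀) := by
      rw [inv_mul_cancel]
      exact hFc.continuousAt ((hUo.prod hUo).mem_nhds ⟨hs₀, hU1⟩)
    have hg : ContinuousAt (fun x : G => ((s₀ : G), s₀⁻¹ * x)) s₀ :=
      (continuous_const.prodMk (continuous_const.mul continuous_id)).continuousAt
    have := ContinuousAt.comp (x := s₀) (f := fun x : G => ((s₀ : G), s₀⁻¹ * x))
      (g := Function.uncurry F) hFat hg
    simpa [Function.comp_def] using this
  have cg : ContinuousAt (fun x : G => h s₀ + s₀ • h (s₀⁻¹ * x) - F s₀ (s₀⁻¹ * x)) s₀ :=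
    ContinuousAt.sub (ContinuousAt.add continuousAt_const (continuousAt_const.smul c2)) c4
  exact cg.congr (Filter.Eventually.of_forall fun x => (hrep x).symm)
end

section
/- Let G be a complex Lie group and A a holomorphic G-module. Every measurable crossed homomorphism c : G → A (c(st) = c(s) + s·c(t)) that is holomorphic on a neighbourhood of the identity is holomorphic on all of G. Hence H¹_lhm(G,A) equals the group of holomorphic crossed homomorphisms from G to A. -/
open scoped Manifold

/-- Let `G` be a complex Lie group and `A` a holomorphic `G`-module.
Every measurable crossed homomorphism `c : G → A` which is holomorphic (i.e. ℂ-differentiable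
in the manifold sense) on a neighbourhood of the identity is holomorphic on all of `G`;
hence `H¹_lhm(G,A)` is the group of holomorphic crossed homomorphisms. -/
theorem stmt_16 {EG EA : Type*}
    [NormedAddCommGroup EG] [NormedSpace ℂ EG] [NormedAddCommGroup EA] [NormedSpace ℂ EA]
    {G : Type*} [Group G] [TopologicalSpace G] [ChartedSpace EG G]
    [LieGroup 𝓘(ℂ, EG) (⊤ : ℕ∞) G]
    {A : Type*} [AddCommGroup A] [TopologicalSpace A] [ChartedSpace EA A]
    [LieAddGroup 𝓘(ℂ, EA) (⊤ : ℕ∞) A]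
    [MeasurableSpace G] [BorelSpace G] [MeasurableSpace A] [BorelSpace A]
    [DistribMulAction G A]
    (hact : MDifferentiable (𝓘(ℂ, EG).prod 𝓘(ℂ, EA)) 𝓘(ℂ, EA)
      (fun p : G × A => p.1 • p.2))
    (c : G → A) (hcmeas : Measurable c)
    (hcoc : ∀ s t : G, c (s * t) = c s + s • c t)
    (U : Set G) (hU : IsOpen U) (hU1 : (1 : G) ∈ U)
    (hhol : MDifferentiableOn 𝓘(ℂ, EG) 𝓘(ℂ, EA) c U) :
    MDifferentiable 𝓘(ℂ, EG) 𝓘(ℂ, EA) c := by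
  intro g
  have heq : c = fun x => c g + g • c (g⁻¹ * x) := by
    funext x
    rw [← hcoc g (g⁻¹ * x), mul_inv_cancel_left]
  rw [heq]
  -- inner map x ↦ g⁻¹ * x
  have h1 : MDifferentiableAt 𝓘(ℂ, EG) 𝓘(ℂ, EG) (fun x : G => g⁻¹ * x) g :=
    (contMDiff_mul_left (n := ((⊤ : ℕ∞) : WithTop ℕ∞)) (a := g⁻¹)).mdifferentiableAt (by simp)
  -- c is differentiable at g⁻¹ * g = 1
  have h2 : MDifferentiableAt 𝓘(ℂ, EG) 𝓘(ℂ, EA) c (g⁻¹ * g) := by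
    rw [inv_mul_cancel]
    exact (hhol.mdifferentiableAt (hU.mem_nhds hU1))
  -- a ↦ g • a is differentiable
  have h3 : MDifferentiableAt 𝓘(ℂ, EA) 𝓘(ℂ, EA) (fun a : A => g • a) (c (g⁻¹ * g)) := by
    have : (fun a : A => g • a)
        = (fun p : G × A => p.1 • p.2) ∘ (fun a : A => ((g : G), a)) := rfl
    rw [this]
    exact (hact (g, c (g⁻¹ * g))).comp _
      (mdifferentiableAt_const.prodMk mdifferentiableAt_id)
  have h4 : MDifferentiableAt 𝓘(ℂ, EA) 𝓘(ℂ, EA) (fun b : A => c g + b)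
      (g • c (g⁻¹ * g)) := mdifferentiableAt_add_left
  exact h4.comp g (h3.comp g (h2.comp g h1))
end
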